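/- For every integer j ≥ 2 and every real a ≥ 0, (j+1)·(Φ(a√(j+1)) − Φ(a√j)) ≤ (3/√(2π)) ∫ from √(2·ln(3/2)) to √(3·ln(3/2)) of e^{−t²/2} dt, and this right-hand side is at most 0.147. -/

import Mathlib

open MeasureTheory ProbabilityTheory Real

/-- The standard normal cumulative distribution function
`Φ(x) = (1/√(2π)) ∫_{-∞}^{x} e^{-t²/2} dt`. -/
noncomputable def stdGaussianCDF (x : ℝ) : ℝ :=
  (Real.sqrt (2 * Real.pi))⁻¹ * ∫ t in Set.Iic x, Real.exp (-t ^ 2 / 2)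

open intervalIntegral Set

noncomputable def f (t : ℝ) : ℝ := Real.exp (-t ^ 2 / 2)

lemma f_cont : Continuous f := by unfold f; fun_prop

lemma f_int : Integrable f := by
  have h := integrable_exp_neg_mul_sq (by norm_num : (0:ℝ) < 1/2)
  have : f = fun t : ℝ => Real.exp (-(1/2) * t ^ 2) := by
    funext t; unfold f; ring_nf
  rw [this]; exact h

lemma f_ii (c b : ℝ) : IntervalIntegrable f volume c b := f_cont.intervalIntegrable c b

lemma sqrt_ub (x q : ℝ) (h : x ≤ q^2) (hq : 0 ≤ q) : Real.sqrt x ≤ q := by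
  calc Real.sqrt x ≤ Real.sqrt (q^2) := Real.sqrt_le_sqrt h
    _ = q := Real.sqrt_sq hq

lemma sqrt_lb (x q : ℝ) (h : q^2 ≤ x) (hq : 0 ≤ q) : q ≤ Real.sqrt x := by
  calc q = Real.sqrt (q^2) := (Real.sqrt_sq hq).symm
    _ ≤ Real.sqrt x := Real.sqrt_le_sqrt h

lemma cdf_diff (c b : ℝ) :
    stdGaussianCDF b - stdGaussianCDF c
      = (Real.sqrt (2 * Real.pi))⁻¹ * ∫ t in c..b, f t := by
  unfold stdGaussianCDF
  rw [← mul_sub]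
  congr 1
  exact intervalIntegral.integral_Iic_sub_Iic f_int.integrableOn f_int.integrableOn

lemma exp_neg_le (x r : ℝ) (hx : 0 ≤ x)
    (h : 1 ≤ r * (1 + x + x^2/2 + x^3/6 + x^4/24)) : Real.exp (-x) ≤ r := by
  have hS0 : 0 < 1 + x + x^2/2 + x^3/6 + x^4/24 := by positivity
  have hS : (1 + x + x^2/2 + x^3/6 + x^4/24) ≤ Real.exp x := by
    have := Real.sum_le_exp_of_nonneg hx 5
    simp [Finset.sum_range_succ, Nat.factorial] at this
    linarith
  have hep := Real.exp_pos x
  have hr : 0 ≤ r := by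
    by_contra hr; push_neg at hr
    nlinarith [mul_neg_of_neg_of_pos hr hS0]
  have h2 : 1 ≤ r * Real.exp x := le_trans h (by nlinarith)
  rw [Real.exp_neg]
  calc (Real.exp x)⁻¹ = (Real.exp x)⁻¹ * 1 := by ring
    _ ≤ (Real.exp x)⁻¹ * (r * Real.exp x) :=
        mul_le_mul_of_nonneg_left h2 (by positivity)
    _ = r := by field_simp

lemma le_exp_neg (x r : ℝ) (hx : 0 ≤ x) (hx1 : x ≤ 1) (hr : 0 ≤ r)
    (h : r * (1 + x + x^2/2 + x^3/6 + x^4/24 + x^5/120 + x^6*7/4320) ≤ 1) :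
    r ≤ Real.exp (-x) := by
  have hS : Real.exp x ≤ 1 + x + x^2/2 + x^3/6 + x^4/24 + x^5/120 + x^6*7/4320 := by
    have := Real.exp_bound' hx hx1 (n := 6) (by norm_num)
    simp [Finset.sum_range_succ, Nat.factorial] at this
    linarith
  have hep := Real.exp_pos x
  have h2 : r * Real.exp x ≤ 1 := le_trans (by nlinarith) h
  calc r = r * Real.exp x * (Real.exp x)⁻¹ := by field_simp
    _ ≤ 1 * (Real.exp x)⁻¹ := mul_le_mul_of_nonneg_right h2 (by positivity)
    _ = Real.exp (-x) := by rw [Real.exp_neg]; ring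

-- log(3/2) bounds
lemma L_nonneg : 0 ≤ Real.log (3/2) := Real.log_nonneg (by norm_num)

lemma L_ub : Real.log (3/2) ≤ 0.405466 := by
  rw [Real.log_le_iff_le_exp (by norm_num)]
  have := Real.sum_le_exp_of_nonneg (by norm_num : (0:ℝ) ≤ 0.405466) 7
  simp [Finset.sum_range_succ, Nat.factorial] at this
  norm_num at this ⊢
  linarith

lemma L_lb : 0.405464 ≤ Real.log (3/2) := by
  rw [Real.le_log_iff_exp_le (by norm_num)]
  have := Real.exp_bound' (x := 0.405464) (by norm_num) (by norm_num) (n := 6) (by norm_num)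
  simp [Finset.sum_range_succ, Nat.factorial] at this
  norm_num at this ⊢
  linarith

-- ∫ exp (C - m t) over c..b
lemma exp_lin_integral (C m c b : ℝ) (hm : m ≠ 0) :
    ∫ t in c..b, Real.exp (C - m*t)
      = (Real.exp (C - m*c) - Real.exp (C - m*b)) / m := by
  have hd : ∀ t ∈ uIcc c b, HasDerivAt (fun t => -Real.exp (C - m*t)/m)
      (Real.exp (C - m*t)) t := by
    intro t _
    have h1 : HasDerivAt (fun t : ℝ => C - m*t) (-m) t := by
      simpa using ((hasDerivAt_id t).const_mul m).const_sub C
    have h2 := (h1.exp.div_const m).neg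
    convert h2 using 1
    · rfl
    · rfl
    · funext x; rw [neg_div]; rfl
    · rw [mul_neg, neg_div, neg_neg, mul_comm, mul_div_assoc, div_self hm, mul_one]
  rw [intervalIntegral.integral_eq_sub_of_hasDerivAt hd
    ((by fun_prop : Continuous fun t => Real.exp (C - m*t)).intervalIntegrable c b)]
  field_simp
  ring

lemma tangent_upper (c b m : ℝ) (hm : 0 < m) (hcb : c ≤ b) :
    ∫ t in c..b, f t ≤ (Real.exp (m^2/2 - m*c) - Real.exp (m^2/2 - m*b)) / m := by
  have h1 : ∫ t in c..b, f t ≤ ∫ t in c..b, Real.exp (m^2/2 - m*t) := by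
    apply intervalIntegral.integral_mono_on hcb (f_ii c b)
      ((by fun_prop : Continuous fun t => Real.exp (m^2/2 - m*t)).intervalIntegrable c b)
    intro t _
    unfold f
    apply Real.exp_le_exp.2
    nlinarith [sq_nonneg (t - m)]
  rw [exp_lin_integral _ _ _ _ (ne_of_gt hm)] at h1
  exact h1

lemma tangent_lower (c b m e : ℝ) (hm : 0 < m) (hcb : c ≤ b) (he : 0 ≤ e)
    (hpt : ∀ t ∈ Set.Icc c b, (t - m)^2 ≤ 2*e) :
    Real.exp (-e) * ((Real.exp (m^2/2 - m*c) - Real.exp (m^2/2 - m*b)) / m)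
      ≤ ∫ t in c..b, f t := by
  have h1 : ∫ t in c..b, Real.exp ((m^2/2 - e) - m*t) ≤ ∫ t in c..b, f t := by
    apply intervalIntegral.integral_mono_on hcb
      ((by fun_prop : Continuous fun t => Real.exp ((m^2/2 - e) - m*t)).intervalIntegrable c b)
      (f_ii c b)
    intro t ht
    unfold f
    apply Real.exp_le_exp.2
    have := hpt t ht
    nlinarith
  rw [exp_lin_integral _ _ _ _ (ne_of_gt hm)] at h1
  calc Real.exp (-e) * ((Real.exp (m^2/2 - m*c) - Real.exp (m^2/2 - m*b)) / m)
      = (Real.exp ((m^2/2 - e) - m*c) - Real.exp ((m^2/2 - e) - m*b)) / m := by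
        rw [show (m^2/2 - e) - m*c = -e + (m^2/2 - m*c) by ring,
            show (m^2/2 - e) - m*b = -e + (m^2/2 - m*b) by ring,
            Real.exp_add, Real.exp_add]
        ring
    _ ≤ ∫ t in c..b, f t := h1

noncomputable def F (x : ℝ) : ℝ := ∫ t in (0:ℝ)..x, f t

lemma hF (x : ℝ) : HasDerivAt F (f x) x :=
  (f_cont.integral_hasStrictDerivAt 0 x).hasDerivAt

lemma int_eq_F (c b : ℝ) : ∫ t in c..b, f t = F b - F c := by
  have h := intervalIntegral.integral_add_adjacent_intervals (μ := volume)
    (f := f) (a := (0:ℝ)) (b := c) (c := b) (f_ii 0 c) (f_ii c b)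
  unfold F
  linarith

-- the H function for j = 2
noncomputable def H (x : ℝ) : ℝ := F (Real.sqrt 3 * x) - F (Real.sqrt 2 * x)

lemma hH (x : ℝ) : HasDerivAt H
    (f (Real.sqrt 3 * x) * Real.sqrt 3 - f (Real.sqrt 2 * x) * Real.sqrt 2) x := by
  have h1 : HasDerivAt (fun x => F (Real.sqrt 3 * x)) (f (Real.sqrt 3 * x) * Real.sqrt 3) x :=
    HasDerivAt.comp x (hF _) (by simpa using (hasDerivAt_id x).const_mul (Real.sqrt 3))
  have h2 : HasDerivAt (fun x => F (Real.sqrt 2 * x)) (f (Real.sqrt 2 * x) * Real.sqrt 2) x :=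
    HasDerivAt.comp x (hF _) (by simpa using (hasDerivAt_id x).const_mul (Real.sqrt 2))
  exact h1.sub h2

lemma sqrt_mul_sqrt_32 : Real.sqrt (3/2) * Real.sqrt 2 = Real.sqrt 3 := by
  rw [← Real.sqrt_mul (by norm_num : (0:ℝ) ≤ 3/2)]
  norm_num

lemma sign_core (y L : ℝ) (hexpL : Real.exp (L/2) = Real.sqrt (3/2)) (h : y ≤ L) :
    Real.exp (-y) * Real.sqrt 2 ≤ Real.exp (-(3*y)/2) * Real.sqrt 3 := by
  have e1 : Real.exp (-y) = Real.exp (-(3*y)/2) * Real.exp (y/2) := by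
    rw [← Real.exp_add]; ring_nf
  rw [e1, mul_assoc]
  apply mul_le_mul_of_nonneg_left _ (le_of_lt (Real.exp_pos _))
  calc Real.exp (y/2) * Real.sqrt 2 ≤ Real.exp (L/2) * Real.sqrt 2 := by
        apply mul_le_mul_of_nonneg_right (Real.exp_le_exp.2 (by linarith)) (Real.sqrt_nonneg 2)
    _ = Real.sqrt 3 := by rw [hexpL, sqrt_mul_sqrt_32]

lemma sign_core' (y L : ℝ) (hexpL : Real.exp (L/2) = Real.sqrt (3/2)) (h : L ≤ y) :
    Real.exp (-(3*y)/2) * Real.sqrt 3 ≤ Real.exp (-y) * Real.sqrt 2 := by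
  have e1 : Real.exp (-y) = Real.exp (-(3*y)/2) * Real.exp (y/2) := by
    rw [← Real.exp_add]; ring_nf
  rw [e1, mul_assoc]
  apply mul_le_mul_of_nonneg_left _ (le_of_lt (Real.exp_pos _))
  calc Real.sqrt 3 = Real.exp (L/2) * Real.sqrt 2 := by rw [hexpL, sqrt_mul_sqrt_32]
    _ ≤ Real.exp (y/2) * Real.sqrt 2 := by
        apply mul_le_mul_of_nonneg_right (Real.exp_le_exp.2 (by linarith)) (Real.sqrt_nonneg 2)

lemma H_max (a : ℝ) (ha : 0 ≤ a) : H a ≤ H (Real.sqrt (Real.log (3/2))) := by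
  set L := Real.log (3/2) with hLdef
  have hL0 : 0 ≤ L := Real.log_nonneg (by norm_num)
  set s := Real.sqrt L with hsdef
  have hs0 : 0 ≤ s := Real.sqrt_nonneg L
  have hs2 : s^2 = L := Real.sq_sqrt hL0
  have hexpL : Real.exp (L/2) = Real.sqrt (3/2) := by
    rw [Real.exp_half, Real.exp_log (by norm_num)]
  have h2 : (Real.sqrt 2)^2 = 2 := Real.sq_sqrt (by norm_num)
  have h3 : (Real.sqrt 3)^2 = 3 := Real.sq_sqrt (by norm_num)
  have hdiff : Differentiable ℝ H := fun x => (hH x).differentiableAt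
  have e2 : ∀ x : ℝ, f (Real.sqrt 2 * x) = Real.exp (-x^2) := by
    intro x; unfold f
    rw [show -(Real.sqrt 2 * x)^2/2 = -((Real.sqrt 2)^2 * x^2)/2 by ring, h2]
    congr 1; ring
  have e3 : ∀ x : ℝ, f (Real.sqrt 3 * x) = Real.exp (-(3*x^2)/2) := by
    intro x; unfold f
    rw [show -(Real.sqrt 3 * x)^2/2 = -((Real.sqrt 3)^2 * x^2)/2 by ring, h3]
  rcases le_total a s with hle | hge
  · -- monotone on Icc 0 s
    have hmono : MonotoneOn H (Set.Icc 0 s) := by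
      apply monotoneOn_of_deriv_nonneg (convex_Icc 0 s) hdiff.continuous.continuousOn
        hdiff.differentiableOn
      intro x hx
      rw [interior_Icc] at hx
      rw [(hH x).deriv]
      rw [e2, e3]
      have hx2 : x^2 ≤ L := by
        rw [← hs2]; exact pow_le_pow_left₀ (le_of_lt hx.1) (le_of_lt hx.2) 2
      have := sign_core (x^2) L hexpL hx2
      linarith
    exact hmono (Set.mem_Icc.2 ⟨ha, hle⟩) (Set.mem_Icc.2 ⟨hs0, le_refl s⟩) hle
  · -- antitone on Ici s
    have hanti : AntitoneOn H (Set.Ici s) := by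
      apply antitoneOn_of_deriv_nonpos (convex_Ici s) hdiff.continuous.continuousOn
        hdiff.differentiableOn
      intro x hx
      rw [interior_Ici] at hx
      rw [(hH x).deriv]
      rw [e2, e3]
      have hx2 : L ≤ x^2 := by
        rw [← hs2]; exact pow_le_pow_left₀ hs0 (le_of_lt hx) 2
      have := sign_core' (x^2) L hexpL hx2
      linarith
    exact hanti (Set.mem_Ici.2 (le_refl s)) (Set.mem_Ici.2 hge) hge

set_option maxHeartbeats 1000000 in
lemma I_bounds :
    0.122 ≤ (∫ t in Real.sqrt (2 * Real.log (3/2))..Real.sqrt (3 * Real.log (3/2)), f t)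
    ∧ (∫ t in Real.sqrt (2 * Real.log (3/2))..Real.sqrt (3 * Real.log (3/2)), f t) ≤ 0.1228 := by
  set L := Real.log (3/2) with hLdef
  have hL0 : 0 ≤ L := L_nonneg
  have hLu : L ≤ 0.405466 := L_ub
  have hLl : (0.405464:ℝ) ≤ L := L_lb
  set c := Real.sqrt (2*L) with hcdef
  set b := Real.sqrt (3*L) with hbdef
  have hc2 : c^2 = 2*L := Real.sq_sqrt (by linarith)
  have hb2 : b^2 = 3*L := Real.sq_sqrt (by linarith)
  have hcb : c * b = L * Real.sqrt 6 := by
    rw [hcdef, hbdef, ← Real.sqrt_mul (by linarith : (0:ℝ) ≤ 2*L),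
      show 2*L*(3*L) = L^2*6 by ring, Real.sqrt_mul (sq_nonneg L), Real.sqrt_sq hL0]
  have hs6l : (2.4494897:ℝ) ≤ Real.sqrt 6 := sqrt_lb _ _ (by norm_num) (by norm_num)
  have hs6u : Real.sqrt 6 ≤ 2.4494898 := sqrt_ub _ _ (by norm_num) (by norm_num)
  have hclb : (0.9005154:ℝ) ≤ c := sqrt_lb _ _ (by nlinarith) (by norm_num)
  have hcub : c ≤ 0.9005177 := sqrt_ub _ _ (by nlinarith) (by norm_num)
  have hblb : (1.1029016:ℝ) ≤ b := sqrt_lb _ _ (by nlinarith) (by norm_num)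
  have hbub : b ≤ 1.1029044 := sqrt_ub _ _ (by nlinarith) (by norm_num)
  have hcble : c ≤ b := Real.sqrt_le_sqrt (by linarith)
  obtain ⟨m, hmdef⟩ : ∃ m : ℝ, m = (c + b)/2 := ⟨_, rfl⟩
  have hml : (1.0017085:ℝ) ≤ m := by rw [hmdef]; linarith
  have hmu : m ≤ 1.0017111 := by rw [hmdef]; linarith
  have hm0 : 0 < m := by linarith
  obtain ⟨X, hXdef⟩ : ∃ X : ℝ, X = L * (3 + 2*Real.sqrt 6)/8 := ⟨_, rfl⟩
  have hXl : (0.4003439:ℝ) ≤ X := by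
    rw [hXdef]
    nlinarith [mul_le_mul hLl (by linarith : (7.8989794:ℝ) ≤ 3 + 2*Real.sqrt 6)
      (by norm_num) (by linarith)]
  have hXu : X ≤ 0.4003460 := by
    rw [hXdef]
    nlinarith [mul_le_mul hLu (by linarith : 3 + 2*Real.sqrt 6 ≤ (7.8989796:ℝ))
      (by linarith) (by norm_num)]
  have hE1 : m^2/2 - m*c = -X := by
    rw [hXdef, hmdef]
    linear_combination (-3/8)*hc2 + (1/8)*hb2 + (-1/4)*hcb
  have hE2 : m^2/2 - m*b = -X - L/2 := by
    rw [hXdef, hmdef]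
    linear_combination (1/8)*hc2 + (-3/8)*hb2 + (-1/4)*hcb
  have hnum : Real.exp (m^2/2 - m*c) - Real.exp (m^2/2 - m*b)
      = Real.exp (-X) * (1 - Real.exp (-(L/2))) := by
    rw [hE1, hE2, show -X - L/2 = -X + -(L/2) by ring, Real.exp_add]
    ring
  have heL : Real.exp (-(L/2)) = Real.sqrt (2/3) := by
    rw [show -(L/2) = (-L)/2 by ring, Real.exp_half, Real.exp_neg,
      Real.exp_log (by norm_num : (0:ℝ) < 3/2),
      show ((3:ℝ)/2)⁻¹ = 2/3 by norm_num]
  have hs23l : (0.8164965:ℝ) ≤ Real.sqrt (2/3) := sqrt_lb _ _ (by norm_num) (by norm_num)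
  have hs23u : Real.sqrt (2/3) ≤ 0.8164966 := sqrt_ub _ _ (by norm_num) (by norm_num)
  have hE1u : Real.exp (-X) ≤ 0.6701308 := by
    calc Real.exp (-X) ≤ Real.exp (-(0.4003439:ℝ)) := Real.exp_le_exp.2 (by linarith)
      _ ≤ 0.6701308 := exp_neg_le _ _ (by norm_num) (by norm_num)
  have hE1l : (0.670086:ℝ) ≤ Real.exp (-X) := by
    calc (0.670086:ℝ) ≤ Real.exp (-(0.4003460:ℝ)) :=
          le_exp_neg _ _ (by norm_num) (by norm_num) (by norm_num) (by norm_num)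
      _ ≤ Real.exp (-X) := Real.exp_le_exp.2 (by linarith)
  have hq : (0:ℝ) ≤ 1 - Real.exp (-(L/2)) := by
    rw [heL]; linarith
  have hqu : 1 - Real.exp (-(L/2)) ≤ 0.1835035 := by rw [heL]; linarith
  have hql : (0.1835034:ℝ) ≤ 1 - Real.exp (-(L/2)) := by rw [heL]; linarith
  constructor
  · -- lower bound
    have hpt : ∀ t ∈ Set.Icc c b, (t - m)^2 ≤ 2*(0.00512017:ℝ) := by
      intro t ht
      have h1 : t - m ≤ 0.1011945 := by
        have := ht.2; linarith
      have h2 : -(0.1011945:ℝ) ≤ t - m := by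
        have := ht.1; linarith
      have := sq_le_sq' h2 h1
      nlinarith
    have h := tangent_lower c b m 0.00512017 hm0 hcble (by norm_num) hpt
    have hexpe : (0.99487983:ℝ) ≤ Real.exp (-(0.00512017:ℝ)) := by
      have := Real.add_one_le_exp (-(0.00512017:ℝ)); linarith
    have hNl : (0.670086:ℝ) * 0.1835034 ≤
        Real.exp (m^2/2 - m*c) - Real.exp (m^2/2 - m*b) := by
      rw [hnum]
      exact mul_le_mul hE1l hql (by norm_num) (le_of_lt (Real.exp_pos _))
    have hdiv : ((0.670086:ℝ) * 0.1835034)/1.0017111 ≤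
        (Real.exp (m^2/2 - m*c) - Real.exp (m^2/2 - m*b))/m :=
      div_le_div₀ (by linarith [hNl, mul_pos (Real.exp_pos (m^2/2 - m*c)) (Real.exp_pos (m^2/2 - m*b))])
        hNl hm0 hmu
    calc (0.122:ℝ) ≤ 0.99487983 * (((0.670086:ℝ) * 0.1835034)/1.0017111) := by norm_num
      _ ≤ Real.exp (-(0.00512017:ℝ)) *
          ((Real.exp (m^2/2 - m*c) - Real.exp (m^2/2 - m*b))/m) := by
          apply mul_le_mul hexpe hdiv (by positivity) (le_of_lt (Real.exp_pos _))
      _ ≤ _ := h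
  · -- upper bound
    have h := tangent_upper c b m hm0 hcble
    have hNu : Real.exp (m^2/2 - m*c) - Real.exp (m^2/2 - m*b)
        ≤ (0.6701308:ℝ) * 0.1835035 := by
      rw [hnum]
      exact mul_le_mul hE1u hqu hq (by norm_num)
    have hN0 : (0:ℝ) ≤ Real.exp (m^2/2 - m*c) - Real.exp (m^2/2 - m*b) := by
      rw [hnum]; positivity
    have hdiv : (Real.exp (m^2/2 - m*c) - Real.exp (m^2/2 - m*b))/m
        ≤ ((0.6701308:ℝ) * 0.1835035)/1.0017085 :=
      div_le_div₀ (by norm_num) hNu (by norm_num) hml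
    calc (∫ t in c..b, f t) ≤ _ := h
      _ ≤ ((0.6701308:ℝ) * 0.1835035)/1.0017085 := hdiv
      _ ≤ 0.1228 := by norm_num

lemma exp_neg_quad (y : ℝ) (hy : 0 ≤ y) : Real.exp (-y) * (1 + y + y^2/2) ≤ 1 := by
  have hS : (1 + y + y^2/2) ≤ Real.exp y := by
    have := Real.sum_le_exp_of_nonneg hy 3
    simp [Finset.sum_range_succ, Nat.factorial] at this
    linarith
  calc Real.exp (-y) * (1 + y + y^2/2) ≤ Real.exp (-y) * Real.exp y :=
        mul_le_mul_of_nonneg_left hS (le_of_lt (Real.exp_pos _))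
    _ = 1 := by rw [← Real.exp_add]; simp

lemma one_sub_exp (x : ℝ) (hx : 0 ≤ x) (hx1 : x ≤ 1) :
    1 - Real.exp (-x) ≤ x - x^2/2 + x^3/6 + 5*x^4/96 := by
  have hb := Real.exp_bound (x := -x) (by rw [abs_neg, abs_of_nonneg hx]; exact hx1)
    (n := 4) (by norm_num)
  rw [abs_neg, abs_of_nonneg hx] at hb
  have h4 : ∑ m ∈ Finset.range 4, (-x) ^ m / (m.factorial : ℝ)
      = 1 - x + x^2/2 - x^3/6 := by
    simp [Finset.sum_range_succ, Nat.factorial]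
    ring
  rw [h4] at hb
  norm_num [Nat.factorial] at hb
  have h1 := (abs_le.1 hb).1
  linarith

set_option maxHeartbeats 4000000 in

set_option maxHeartbeats 4000000 in
lemma case3 (a : ℝ) (ha : 0 ≤ a) :
    4 * ∫ t in (a * Real.sqrt 3)..(a * 2), f t ≤ 0.366 := by
  rcases eq_or_lt_of_le ha with h0 | ha0
  · rw [← h0]
    simp
    norm_num
  set s3 := Real.sqrt 3 with hs3def
  have hs3sq : s3^2 = 3 := Real.sq_sqrt (by norm_num)
  have hs3l : (1.7320508:ℝ) ≤ s3 := sqrt_lb _ _ (by norm_num) (by norm_num)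
  have hs3u : s3 ≤ 1.7320509 := sqrt_ub _ _ (by norm_num) (by norm_num)
  obtain ⟨m, hmdef⟩ : ∃ m : ℝ, m = a*(2+s3)/2 := ⟨_, rfl⟩
  have hm0 : 0 < m := by rw [hmdef]; nlinarith
  have hcble : a * s3 ≤ a * 2 := by nlinarith
  have h := tangent_upper (a*s3) (a*2) m hm0 hcble
  have hE1 : m^2/2 - m*(a*s3) = -((5+4*s3)/8*a^2) := by
    rw [hmdef]; linear_combination (-3*a^2/8)*hs3sq
  have hE2 : m^2/2 - m*(a*2) = -((5+4*s3)/8*a^2) - a^2/2 := by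
    rw [hmdef]; linear_combination (a^2/8)*hs3sq
  rw [hE1, hE2] at h
  have hnum : Real.exp (-((5+4*s3)/8*a^2)) - Real.exp (-((5+4*s3)/8*a^2) - a^2/2)
      = Real.exp (-((5+4*s3)/8*a^2)) * (1 - Real.exp (-(a^2/2))) := by
    rw [show -((5+4*s3)/8*a^2) - a^2/2 = -((5+4*s3)/8*a^2) + -(a^2/2) by ring,
      Real.exp_add]
    ring
  rw [hnum] at h
  have hEm : Real.exp (-((5+4*s3)/8*a^2)) ≤ Real.exp (-(1.4910254*a^2)) := by
    apply Real.exp_le_exp.2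
    have h1 : (1.4910254:ℝ) ≤ (5+4*s3)/8 := by linarith
    nlinarith [sq_nonneg a]
  have hq0 : 0 ≤ 1 - Real.exp (-(a^2/2)) := by
    have : Real.exp (-(a^2/2)) ≤ 1 := Real.exp_le_one_iff.2 (by nlinarith)
    linarith
  have hq1 : 1 - Real.exp (-(a^2/2)) ≤ 1 := by linarith [Real.exp_pos (-(a^2/2))]
  have key : Real.exp (-((5+4*s3)/8*a^2)) * (1 - Real.exp (-(a^2/2))) * 4
      ≤ 0.6829652 * a := by
    rcases le_total (a^2) 2 with h2 | h2
    · have hA := exp_neg_quad (1.4910254*a^2) (by positivity)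
      have hB := one_sub_exp (a^2/2) (by positivity) (by linarith)
      have hQ0 : (0:ℝ) < 1 + 1.4910254*a^2 + (1.4910254*a^2)^2/2 := by positivity
      have hAle : Real.exp (-(1.4910254*a^2))
          ≤ (1 + 1.4910254*a^2 + (1.4910254*a^2)^2/2)⁻¹ := by
        rw [← one_div, le_div_iff₀ hQ0]
        exact hA
      have hP0 : (0:ℝ) ≤ a^2/2 - (a^2/2)^2/2 + (a^2/2)^3/6 + 5*(a^2/2)^4/96 := by
        nlinarith [sq_nonneg a, sq_nonneg (a^2)]
      have step : Real.exp (-((5+4*s3)/8*a^2)) * (1 - Real.exp (-(a^2/2)))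
          ≤ (1 + 1.4910254*a^2 + (1.4910254*a^2)^2/2)⁻¹
            * (a^2/2 - (a^2/2)^2/2 + (a^2/2)^3/6 + 5*(a^2/2)^4/96) :=
        mul_le_mul (le_trans hEm hAle) hB hq0 (by positivity)
      have hpoly : (1 + 1.4910254*a^2 + (1.4910254*a^2)^2/2)⁻¹
            * (a^2/2 - (a^2/2)^2/2 + (a^2/2)^3/6 + 5*(a^2/2)^4/96) * 4
          ≤ 0.6829652 * a := by
        rw [inv_mul_eq_div, div_mul_eq_mul_div, div_le_iff₀ hQ0]
        nlinarith [sq_nonneg (a - 0.5536), sq_nonneg (a^2 - 0.3065), mul_pos ha0 ha0,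
          sq_nonneg (a*(a-0.5536)), sq_nonneg (a*(a^2-0.3065)), sq_nonneg (a^2*(a-0.5536)),
          mul_nonneg (mul_nonneg ha ha) (sq_nonneg (a - 0.5536)),
          mul_nonneg ha (sq_nonneg (a^2 - 0.3065)),
          mul_nonneg ha (sq_nonneg (a - 0.5536))]
      calc Real.exp (-((5+4*s3)/8*a^2)) * (1 - Real.exp (-(a^2/2))) * 4
          ≤ (1 + 1.4910254*a^2 + (1.4910254*a^2)^2/2)⁻¹
            * (a^2/2 - (a^2/2)^2/2 + (a^2/2)^3/6 + 5*(a^2/2)^4/96) * 4 := by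
            apply mul_le_mul_of_nonneg_right step (by norm_num)
        _ ≤ 0.6829652 * a := hpoly
    · have hEb : Real.exp (-(1.4910254*a^2)) ≤ 0.062 := by
        calc Real.exp (-(1.4910254*a^2)) ≤ Real.exp (-(2.9820508:ℝ)) := by
              apply Real.exp_le_exp.2; nlinarith
          _ ≤ 0.062 := exp_neg_le _ _ (by norm_num) (by norm_num)
      have ha2 : (1.4142135:ℝ) ≤ a := by
        nlinarith [sq_nonneg (a - 1.4142135)]
      have hEq : Real.exp (-((5+4*s3)/8*a^2)) * (1 - Real.exp (-(a^2/2)))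
          ≤ Real.exp (-(1.4910254*a^2)) := by
        calc Real.exp (-((5+4*s3)/8*a^2)) * (1 - Real.exp (-(a^2/2)))
            ≤ Real.exp (-((5+4*s3)/8*a^2)) * 1 :=
              mul_le_mul_of_nonneg_left hq1 (le_of_lt (Real.exp_pos _))
          _ = Real.exp (-((5+4*s3)/8*a^2)) := by ring
          _ ≤ Real.exp (-(1.4910254*a^2)) := hEm
      nlinarith [hEq, hEb, ha2]
  -- finish: divide by m ≥ 1.8660254 a
  have hmla : 1.8660254 * a ≤ m := by rw [hmdef]; nlinarith
  have hN0 : 0 ≤ Real.exp (-((5+4*s3)/8*a^2)) * (1 - Real.exp (-(a^2/2))) :=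
    mul_nonneg (le_of_lt (Real.exp_pos _)) hq0
  have hdiv : Real.exp (-((5+4*s3)/8*a^2)) * (1 - Real.exp (-(a^2/2))) / m
      ≤ Real.exp (-((5+4*s3)/8*a^2)) * (1 - Real.exp (-(a^2/2))) / (1.8660254 * a) :=
    div_le_div₀ hN0 (le_refl _) (by nlinarith) hmla
  have hfin : Real.exp (-((5+4*s3)/8*a^2)) * (1 - Real.exp (-(a^2/2))) / (1.8660254 * a)
      ≤ 0.0915 := by
    rw [div_le_iff₀ (by nlinarith : (0:ℝ) < 1.8660254 * a)]
    nlinarith [key]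
  calc 4 * ∫ t in (a * Real.sqrt 3)..(a * 2), f t
      ≤ 4 * (Real.exp (-((5+4*s3)/8*a^2)) * (1 - Real.exp (-(a^2/2))) / m) := by
        linarith [h]
    _ ≤ 4 * 0.0915 := by linarith [le_trans hdiv hfin]
    _ ≤ 0.366 := by norm_num

set_option maxHeartbeats 1000000 in
lemma case4 (a jr : ℝ) (ha : 0 ≤ a) (hj : 4 ≤ jr) :
    (jr + 1) * ∫ t in (a * Real.sqrt jr)..(a * Real.sqrt (jr+1)), f t ≤ 0.366 := by
  have hj0 : (0:ℝ) ≤ jr := by linarith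
  set sj := Real.sqrt jr with hsjdef
  set sj1 := Real.sqrt (jr+1) with hsj1def
  have hsj2 : sj^2 = jr := Real.sq_sqrt hj0
  have hsj12 : sj1^2 = jr + 1 := Real.sq_sqrt (by linarith)
  have hsj0 : 0 ≤ sj := Real.sqrt_nonneg _
  have hsj10 : 0 ≤ sj1 := Real.sqrt_nonneg _
  have hle : sj ≤ sj1 := Real.sqrt_le_sqrt (by linarith)
  have hsj2' : (2:ℝ) ≤ sj := sqrt_lb _ _ (by nlinarith) (by norm_num)
  -- Step 1: integral ≤ (b - c) * f(c)
  have hcble : a * sj ≤ a * sj1 := mul_le_mul_of_nonneg_left hle ha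
  have step1 : (∫ t in (a * sj)..(a * sj1), f t) ≤ (a * sj1 - a * sj) * f (a * sj) := by
    have hmono : (∫ t in (a * sj)..(a * sj1), f t)
        ≤ ∫ _t in (a * sj)..(a * sj1), f (a * sj) := by
      apply intervalIntegral.integral_mono_on hcble (f_ii _ _)
        (intervalIntegrable_const)
      intro t ht
      unfold f
      apply Real.exp_le_exp.2
      have h1 : 0 ≤ a * sj := mul_nonneg ha hsj0
      have h2 : a * sj ≤ t := ht.1
      nlinarith
    rw [intervalIntegral.integral_const] at hmono
    simpa [smul_eq_mul] using hmono
  have hfc : f (a * sj) = Real.exp (-(jr * a^2)/2) := by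
    unfold f
    congr 1
    rw [mul_pow, hsj2]
    ring
  -- Step 3: sqrt(e) * sj * a * exp(-(jr a^2)/2) ≤ 1
  set E := Real.exp (-(jr * a^2)/2) with hEdef
  have hE0 : 0 < E := Real.exp_pos _
  have step3 : Real.sqrt (Real.exp 1) * sj * a * E ≤ 1 := by
    set y := jr * a^2 with hydef
    have hy0 : 0 ≤ y := by positivity
    have h1 : Real.exp 1 * y ≤ Real.exp y := by
      have h2 := Real.add_one_le_exp (y - 1)
      have h3 : Real.exp y = Real.exp 1 * Real.exp (y - 1) := by
        rw [← Real.exp_add]; ring_nf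
      rw [h3]
      have := mul_le_mul_of_nonneg_left h2 (le_of_lt (Real.exp_pos 1))
      calc Real.exp 1 * y = Real.exp 1 * ((y - 1) + 1) := by ring
        _ ≤ Real.exp 1 * Real.exp (y - 1) := by
            apply mul_le_mul_of_nonneg_left h2 (le_of_lt (Real.exp_pos 1))
    have h4 : Real.sqrt (Real.exp 1 * y) ≤ Real.exp (y/2) := by
      rw [Real.exp_half]
      exact Real.sqrt_le_sqrt h1
    have h5 : Real.sqrt (Real.exp 1 * y) = Real.sqrt (Real.exp 1) * (sj * a) := by
      rw [Real.sqrt_mul (le_of_lt (Real.exp_pos 1)), hydef,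
        Real.sqrt_mul hj0, Real.sqrt_sq ha]
    have h6 : E = Real.exp (-(y/2)) := by rw [hEdef]; congr 1; ring
    rw [h6]
    have h7 := mul_le_mul_of_nonneg_right h4 (le_of_lt (Real.exp_pos (-(y/2))))
    rw [← Real.exp_add] at h7
    simp at h7
    rw [h5] at h7
    calc Real.sqrt (Real.exp 1) * sj * a * Real.exp (-(y/2))
        = Real.sqrt (Real.exp 1) * (sj * a) * Real.exp (-(y/2)) := by ring
      _ ≤ 1 := h7
  have hsqe : (1.6487212:ℝ) ≤ Real.sqrt (Real.exp 1) := by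
    apply sqrt_lb _ _ _ (by norm_num)
    nlinarith [Real.exp_one_gt_d9]
  -- sj*sj1 ≥ jr + 0.47
  have hprod : jr + 0.47 ≤ sj * sj1 := by
    have h1 : (jr + 0.47)^2 ≤ (sj * sj1)^2 := by
      rw [mul_pow, hsj2, hsj12]
      nlinarith
    have h2 := Real.sqrt_le_sqrt h1
    rwa [Real.sqrt_sq (by linarith), Real.sqrt_sq (mul_nonneg hsj0 hsj10)] at h2
  -- difference identity
  have hDS : (sj1 - sj) * (sj1 + sj) = 1 := by linear_combination hsj12 - hsj2
  have hD0 : 0 ≤ sj1 - sj := by linarith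
  -- W and final comparison
  have hW : jr + 1 ≤ 0.366 * (Real.sqrt (Real.exp 1) * sj * (sj1 + sj)) := by
    have h1 : Real.sqrt (Real.exp 1) * sj * (sj1 + sj)
        = Real.sqrt (Real.exp 1) * (sj * sj1 + jr) := by
      rw [← hsj2]; ring
    rw [h1]
    have h2 : (2:ℝ)*jr + 0.47 ≤ sj * sj1 + jr := by linarith
    have h3 : 1.6487212 * (2*jr + 0.47) ≤ Real.sqrt (Real.exp 1) * (sj * sj1 + jr) := by
      apply mul_le_mul hsqe h2 (by linarith) (by linarith)
    nlinarith
  have hW0 : 0 < Real.sqrt (Real.exp 1) * sj * (sj1 + sj) := by nlinarith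
  -- assemble
  have hEW : (jr + 1) * ((a * sj1 - a * sj) * E)
      * (Real.sqrt (Real.exp 1) * sj * (sj1 + sj)) ≤ (jr + 1) * 1 := by
    have heq : (jr + 1) * ((a * sj1 - a * sj) * E)
        * (Real.sqrt (Real.exp 1) * sj * (sj1 + sj))
        = (jr + 1) * (((sj1 - sj) * (sj1 + sj)) * (Real.sqrt (Real.exp 1) * sj * a * E)) := by
      ring
    rw [heq, hDS, one_mul]
    apply mul_le_mul_of_nonneg_left step3 (by linarith)
  have hmain : (jr + 1) * ((a * sj1 - a * sj) * E) ≤ 0.366 := by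
    have h2 : (jr + 1) * ((a * sj1 - a * sj) * E)
        * (Real.sqrt (Real.exp 1) * sj * (sj1 + sj))
        ≤ 0.366 * (Real.sqrt (Real.exp 1) * sj * (sj1 + sj)) := by
      calc _ ≤ (jr + 1) * 1 := hEW
        _ = jr + 1 := by ring
        _ ≤ _ := hW
    exact le_of_mul_le_mul_right h2 hW0
  calc (jr + 1) * ∫ t in (a * sj)..(a * sj1), f t
      ≤ (jr + 1) * ((a * sj1 - a * sj) * f (a * sj)) := by
        apply mul_le_mul_of_nonneg_left step1 (by linarith)
    _ = (jr + 1) * ((a * sj1 - a * sj) * E) := by rw [hfc]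
    _ ≤ 0.366 := hmain

-- j = 2 case
lemma case2 (a : ℝ) (ha : 0 ≤ a) :
    3 * ∫ t in (a * Real.sqrt 2)..(a * Real.sqrt 3), f t
      ≤ 3 * ∫ t in Real.sqrt (2 * Real.log (3/2))..Real.sqrt (3 * Real.log (3/2)), f t := by
  have hL0 : 0 ≤ Real.log (3/2) := L_nonneg
  have h1 : (∫ t in (a * Real.sqrt 2)..(a * Real.sqrt 3), f t) = H a := by
    rw [int_eq_F]
    unfold H
    rw [mul_comm a (Real.sqrt 3), mul_comm a (Real.sqrt 2)]
  have h2 : (∫ t in Real.sqrt (2 * Real.log (3/2))..Real.sqrt (3 * Real.log (3/2)), f t)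
      = H (Real.sqrt (Real.log (3/2))) := by
    rw [int_eq_F]
    unfold H
    rw [← Real.sqrt_mul (by norm_num : (0:ℝ) ≤ 3) (Real.log (3/2)),
      ← Real.sqrt_mul (by norm_num : (0:ℝ) ≤ 2) (Real.log (3/2))]
  rw [h1, h2]
  linarith [H_max a ha]

theorem stmt7 (j : ℕ) (hj : 2 ≤ j) (a : ℝ) (ha : 0 ≤ a) :
    ((j : ℝ) + 1) * (stdGaussianCDF (a * Real.sqrt ((j : ℝ) + 1)) - stdGaussianCDF (a * Real.sqrt j))
        ≤ 3 / Real.sqrt (2 * Real.pi)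
          * ∫ t in Real.sqrt (2 * Real.log (3 / 2))..Real.sqrt (3 * Real.log (3 / 2)),
              Real.exp (-t ^ 2 / 2)
      ∧ 3 / Real.sqrt (2 * Real.pi)
          * (∫ t in Real.sqrt (2 * Real.log (3 / 2))..Real.sqrt (3 * Real.log (3 / 2)),
              Real.exp (-t ^ 2 / 2)) ≤ 0.147 := by
  have hfun : (fun t : ℝ => Real.exp (-t ^ 2 / 2)) = f := rfl
  have hI := I_bounds
  rw [hfun]
  constructor
  · -- Part 1
    have key : ((j:ℝ) + 1) * (∫ t in (a * Real.sqrt (j:ℝ))..(a * Real.sqrt ((j:ℝ)+1)), f t)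
        ≤ 3 * ∫ t in Real.sqrt (2 * Real.log (3/2))..Real.sqrt (3 * Real.log (3/2)), f t := by
      rcases Nat.lt_or_ge j 4 with h4 | h4
      · interval_cases j
        · -- j = 2
          push_cast
          rw [show ((2:ℝ) + 1) = 3 by norm_num]
          exact case2 a ha
        · -- j = 3
          push_cast
          rw [show ((3:ℝ) + 1) = 4 by norm_num]
          rw [show Real.sqrt (4:ℝ) = 2 by
              rw [show (4:ℝ) = 2^2 by norm_num, Real.sqrt_sq (by norm_num)]]
          calc 4 * ∫ t in (a * Real.sqrt 3)..(a * 2), f t ≤ 0.366 := case3 a ha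
            _ ≤ 3 * ∫ t in Real.sqrt (2 * Real.log (3/2))..Real.sqrt (3 * Real.log (3/2)), f t := by
              linarith [hI.1]
      · have h4' : (4:ℝ) ≤ (j:ℝ) := by exact_mod_cast h4
        calc ((j:ℝ) + 1) * ∫ t in (a * Real.sqrt (j:ℝ))..(a * Real.sqrt ((j:ℝ)+1)), f t
            ≤ 0.366 := case4 a (j:ℝ) ha h4'
          _ ≤ 3 * ∫ t in Real.sqrt (2 * Real.log (3/2))..Real.sqrt (3 * Real.log (3/2)), f t := by
              linarith [hI.1]
    rw [cdf_diff]
    have h2π : (0:ℝ) ≤ (Real.sqrt (2 * Real.pi))⁻¹ := by positivity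
    calc ((j:ℝ) + 1) * ((Real.sqrt (2 * Real.pi))⁻¹
          * ∫ t in (a * Real.sqrt (j:ℝ))..(a * Real.sqrt ((j:ℝ)+1)), f t)
        = (Real.sqrt (2 * Real.pi))⁻¹ * (((j:ℝ) + 1)
          * ∫ t in (a * Real.sqrt (j:ℝ))..(a * Real.sqrt ((j:ℝ)+1)), f t) := by ring
      _ ≤ (Real.sqrt (2 * Real.pi))⁻¹
          * (3 * ∫ t in Real.sqrt (2 * Real.log (3/2))..Real.sqrt (3 * Real.log (3/2)), f t) :=
          mul_le_mul_of_nonneg_left key h2π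
      _ = 3 / Real.sqrt (2 * Real.pi)
          * ∫ t in Real.sqrt (2 * Real.log (3/2))..Real.sqrt (3 * Real.log (3/2)), f t := by
          ring
  · -- Part 2
    have hs : (2.506628:ℝ) ≤ Real.sqrt (2 * Real.pi) := by
      apply sqrt_lb _ _ _ (by norm_num)
      nlinarith [Real.pi_gt_d6]
    have hs0 : (0:ℝ) < Real.sqrt (2 * Real.pi) := by linarith
    have hI0 : (0:ℝ) ≤ ∫ t in Real.sqrt (2 * Real.log (3/2))..Real.sqrt (3 * Real.log (3/2)), f t := by
      linarith [hI.1]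
    have hdd : 3 / Real.sqrt (2 * Real.pi) ≤ 3 / 2.506628 := by
      apply div_le_div_of_nonneg_left (by norm_num) (by norm_num) hs
    calc 3 / Real.sqrt (2 * Real.pi)
          * (∫ t in Real.sqrt (2 * Real.log (3/2))..Real.sqrt (3 * Real.log (3/2)), f t)
        ≤ 3 / 2.506628 * 0.1228 := mul_le_mul hdd hI.2 hI0 (by norm_num)
      _ ≤ 0.147 := by norm_num
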